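/- Let q ≡ 1 (mod 4) be a prime power. The rank of the transitive permutation group PSL(2,q) acting on P = (F_q²\{0})/⟨i⟩ (i.e., the number of orbits of a point stabilizer on P) is (q-1)/2; equivalently, the associated Schurian association scheme has (q-3)/2 classes. -/

import Mathlib

open Matrix MulAction Pointwise

abbrev SL2 (F : Type) [Field F] := Matrix.SpecialLinearGroup (Fin 2) F

abbrev PSL2 (F : Type) [Field F] := SL2 F ⧸ Subgroup.center (SL2 F)

/-- Nonzero vectors of `F²`. -/
def Vec (F : Type) [Field F] := {v : Fin 2 → F // v ≠ 0}

/-- Two nonzero vectors are related if they differ by multiplication by a power of `i`. -/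
def vrel (F : Type) [Field F] (i : F) (v w : Vec F) : Prop :=
  ∃ n : ℕ, (w.1 : Fin 2 → F) = i ^ n • v.1

/-- The point set `P = (F² \ {0})/⟨i⟩`. -/
def Pts (F : Type) [Field F] (i : F) := Quot (vrel F i)

/-- The class of a nonzero vector in `P`. -/
def mkPt (F : Type) [Field F] (i : F) (v : Fin 2 → F) (hv : v ≠ 0) : Pts F i :=
  Quot.mk _ ⟨v, hv⟩

lemma vec_fst_ne_zero {F : Type} [Field F] (b : F) : ![(1 : F), b] ≠ 0 := by
  intro h
  simpa using congrFun h 0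

lemma vec_snd_ne_zero {F : Type} [Field F] (a : F) : ![a, (1 : F)] ≠ 0 := by
  intro h
  simpa using congrFun h 1

/-- `SL(2,q)` acts on nonzero vectors. -/
def slVecSMul {F : Type} [Field F] (A : SL2 F) (v : Vec F) : Vec F :=
  ⟨(A : Matrix (Fin 2) (Fin 2) F) *ᵥ v.1, by
    intro h
    apply v.2
    have h2 : ((A⁻¹ : SL2 F) : Matrix (Fin 2) (Fin 2) F) *ᵥ
        ((A : Matrix (Fin 2) (Fin 2) F) *ᵥ v.1) = 0 := by rw [h, Matrix.mulVec_zero]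
    rwa [Matrix.mulVec_mulVec, ← Matrix.SpecialLinearGroup.coe_mul, inv_mul_cancel,
      Matrix.SpecialLinearGroup.coe_one, Matrix.one_mulVec] at h2⟩

instance (F : Type) [Field F] (i : F) : SMul (SL2 F) (Pts F i) :=
  ⟨fun A => Quot.map (slVecSMul A) (by
    rintro v w ⟨n, hn⟩
    exact ⟨n, by simp [slVecSMul, hn, Matrix.mulVec_smul]⟩)⟩

instance (F : Type) [Field F] (i : F) : MulAction (SL2 F) (Pts F i) where
  one_smul p := by
    induction p using Quot.ind with | _ v => ?_
    show Quot.mk _ (slVecSMul 1 v) = Quot.mk _ v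
    congr 1
    apply Subtype.ext
    simp [slVecSMul, Subtype.ext_iff]
  mul_smul A B p := by
    induction p using Quot.ind with | _ v => ?_
    show Quot.mk _ (slVecSMul (A * B) v) = Quot.mk _ (slVecSMul A (slVecSMul B v))
    congr 1
    apply Subtype.ext
    simp only [slVecSMul, Matrix.SpecialLinearGroup.coe_mul, Matrix.mulVec_mulVec]

/-- The stabilizer in `PSL(2,q)` of a point of `P`, i.e. the image in the quotient
`PSL(2,q) = SL(2,q)/center` of the stabilizer in `SL(2,q)`. -/
def pslPtStab (F : Type) [Field F] (i : F) (p : Pts F i) : Subgroup (PSL2 F) :=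
  (MulAction.stabilizer (SL2 F) p).map (QuotientGroup.mk' (Subgroup.center (SL2 F)))

/-- The setwise stabilizer in `PSL(2,q)` of a set of points of `P`. -/
def pslSetStab (F : Type) [Field F] (i : F) (s : Set (Pts F i)) : Subgroup (PSL2 F) :=
  (MulAction.stabilizer (SL2 F) s).map (QuotientGroup.mk' (Subgroup.center (SL2 F)))

section AuxRank

variable {F : Type} [Field F]

lemma myVecEta (v : Fin 2 → F) : ![v 0, v 1] = v := by
  funext x; fin_cases x <;> rfl

lemma my_vec_fst_ne {v : Fin 2 → F} (hv : v ≠ 0) (h1 : v 1 = 0) : v 0 ≠ 0 := by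
  intro h0
  apply hv
  funext x
  fin_cases x
  · exact h0
  · exact h1

lemma my_i_ne_zero {i : F} (hi : i ^ 2 = -1) : i ≠ 0 := by
  intro h
  rw [h] at hi
  have : (0 : F) = -1 := by simpa using hi.symm
  simpa using this.symm

lemma my_i_pow4 {i : F} (hi : i ^ 2 = -1) : i ^ 4 = 1 := by
  have h : i ^ 4 = i ^ 2 * i ^ 2 := by ring
  rw [h, hi]; ring

lemma my_ipow_inv {i : F} (hi : i ^ 2 = -1) (n : ℕ) : i ^ (3 * n) * i ^ n = 1 := by
  rw [← pow_add]
  have h : 3 * n + n = 4 * n := by ring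
  rw [h, pow_mul, my_i_pow4 hi, one_pow]

lemma my_vrel_equiv (i : F) (hi : i ^ 2 = -1) : Equivalence (vrel F i) := by
  constructor
  · exact fun v => ⟨0, by simp⟩
  · rintro v w ⟨n, hn⟩
    refine ⟨3 * n, ?_⟩
    rw [hn, smul_smul, my_ipow_inv hi, one_smul]
  · rintro a b c ⟨n, hn⟩ ⟨m, hm⟩
    exact ⟨m + n, by rw [hm, hn, smul_smul, ← pow_add]⟩

lemma my_pts_eq (i : F) (hi : i ^ 2 = -1) {v w : Vec F} :
    Quot.mk (vrel F i) v = Quot.mk (vrel F i) w ↔ vrel F i v w := by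
  rw [Quot.eq]
  exact (my_vrel_equiv i hi).eqvGen_iff

lemma my_mulVec_two (A : Matrix (Fin 2) (Fin 2) F) (v : Fin 2 → F) :
    A *ᵥ v = ![A 0 0 * v 0 + A 0 1 * v 1, A 1 0 * v 0 + A 1 1 * v 1] := by
  funext x
  fin_cases x <;>
    simp [Matrix.mulVec, dotProduct, Fin.sum_univ_two]

lemma my_mk_pow_mul (u x : Fˣ) (n : ℕ) :
    (QuotientGroup.mk (u ^ n * x) : Fˣ ⧸ Subgroup.zpowers u) = QuotientGroup.mk x := by
  rw [QuotientGroup.eq]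
  have h : (u ^ n * x)⁻¹ * x = (u ^ n)⁻¹ := by
    rw [mul_comm (u ^ n) x, _root_.mul_inv_rev, mul_assoc, inv_mul_cancel, mul_one]
  rw [h]
  exact Subgroup.inv_mem _ (Subgroup.npow_mem_zpowers u n)

lemma my_mk_eq_iff [Fintype F] (u x y : Fˣ) :
    (QuotientGroup.mk x : Fˣ ⧸ Subgroup.zpowers u) = QuotientGroup.mk y ↔
      ∃ n : ℕ, y = u ^ n * x := by
  rw [QuotientGroup.eq, ← mem_powers_iff_mem_zpowers, Submonoid.mem_powers_iff]
  constructor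
  · rintro ⟨n, hn⟩
    have hx : x * u ^ n = y := by rw [hn, ← mul_assoc, mul_inv_cancel, one_mul]
    exact ⟨n, by rw [← hx, mul_comm]⟩
  · rintro ⟨n, rfl⟩
    refine ⟨n, ?_⟩
    rw [mul_comm (u ^ n) x, ← mul_assoc, inv_mul_cancel, one_mul]

open Classical in
/-- The invariant classifying the orbits. -/
noncomputable def phiV (i : F) (u : Fˣ) (v : Vec F) :
    (Fˣ ⧸ Subgroup.zpowers u) ⊕ (Fˣ ⧸ Subgroup.zpowers u) :=
  if h : v.1 1 = 0 then
    Sum.inl (QuotientGroup.mk (Units.mk0 (v.1 0) (my_vec_fst_ne v.2 h)))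
  else
    Sum.inr (QuotientGroup.mk (Units.mk0 (v.1 1) h))

lemma phiV_vrel {i : F} (hi : i ^ 2 = -1) (u : Fˣ) (hu : (u : F) = i) {v w : Vec F}
    (hvw : vrel F i v w) : phiV i u w = phiV i u v := by
  obtain ⟨n, hn⟩ := hvw
  have h0 : w.1 0 = i ^ n * v.1 0 := by rw [hn]; rfl
  have h1 : w.1 1 = i ^ n * v.1 1 := by rw [hn]; rfl
  by_cases hv1 : v.1 1 = 0
  · have hw1 : w.1 1 = 0 := by rw [h1, hv1, mul_zero]
    rw [phiV, phiV, dif_pos hw1, dif_pos hv1]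
    have key : Units.mk0 (w.1 0) (my_vec_fst_ne w.2 hw1) =
        u ^ n * Units.mk0 (v.1 0) (my_vec_fst_ne v.2 hv1) := by
      apply Units.ext
      simp [h0, hu]
    rw [key, my_mk_pow_mul]
  · have hw1 : w.1 1 ≠ 0 := by
      rw [h1]
      exact mul_ne_zero (pow_ne_zero n (my_i_ne_zero hi)) hv1
    rw [phiV, phiV, dif_neg hw1, dif_neg hv1]
    have key : Units.mk0 (w.1 1) hw1 = u ^ n * Units.mk0 (v.1 1) hv1 := by
      apply Units.ext
      simp [h1, hu]
    rw [key, my_mk_pow_mul]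

noncomputable def phiP {i : F} (hi : i ^ 2 = -1) (u : Fˣ) (hu : (u : F) = i) :
    Pts F i → (Fˣ ⧸ Subgroup.zpowers u) ⊕ (Fˣ ⧸ Subgroup.zpowers u) :=
  Quot.lift (phiV i u) (fun _ _ h => (phiV_vrel hi u hu h).symm)

lemma my_mem_stab_iff {i : F} (hi : i ^ 2 = -1) (A : SL2 F) :
    A ∈ MulAction.stabilizer (SL2 F) (mkPt F i ![1, 0] (vec_fst_ne_zero 0)) ↔
      ∃ n : ℕ, (A : Matrix (Fin 2) (Fin 2) F) 1 0 = 0 ∧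
        i ^ n * (A : Matrix (Fin 2) (Fin 2) F) 0 0 = 1 ∧
        (A : Matrix (Fin 2) (Fin 2) F) 1 1 = i ^ n := by
  set M : Matrix (Fin 2) (Fin 2) F := (A : Matrix (Fin 2) (Fin 2) F) with hM
  have hdet : M 0 0 * M 1 1 - M 0 1 * M 1 0 = 1 := by
    rw [← Matrix.det_fin_two]
    exact A.2
  constructor
  · intro hA
    have hA' : Quot.mk (vrel F i) (slVecSMul A ⟨![1, 0], vec_fst_ne_zero 0⟩) =
        Quot.mk (vrel F i) ⟨![1, 0], vec_fst_ne_zero 0⟩ := hA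
    obtain ⟨n, hn⟩ := (my_pts_eq i hi).mp hA'
    have hn' : (![1, 0] : Fin 2 → F) = i ^ n • (M *ᵥ ![1, 0]) := hn
    rw [my_mulVec_two] at hn'
    have hc0 : (1 : F) = i ^ n * (M 0 0 * 1 + M 0 1 * 0) := congrFun hn' 0
    have hc1 : (0 : F) = i ^ n * (M 1 0 * 1 + M 1 1 * 0) := congrFun hn' 1
    have h00 : i ^ n * M 0 0 = 1 := by
      rw [mul_zero, add_zero, mul_one] at hc0; exact hc0.symm
    have h10 : M 1 0 = 0 := by
      rw [mul_zero, add_zero, mul_one] at hc1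
      rcases mul_eq_zero.mp hc1.symm with h | h
      · exact absurd h (pow_ne_zero n (my_i_ne_zero hi))
      · exact h
    refine ⟨n, h10, h00, ?_⟩
    have : M 0 0 * M 1 1 = 1 := by
      rw [h10, mul_zero, sub_zero] at hdet; exact hdet
    calc M 1 1 = (i ^ n * M 0 0) * M 1 1 := by rw [h00, one_mul]
      _ = i ^ n * (M 0 0 * M 1 1) := by ring
      _ = i ^ n := by rw [this, mul_one]
  · rintro ⟨n, h10, h00, h11⟩
    show A • mkPt F i ![1, 0] (vec_fst_ne_zero 0) = mkPt F i ![1, 0] (vec_fst_ne_zero 0)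
    refine (my_pts_eq i hi).mpr ⟨n, ?_⟩
    show (![1, 0] : Fin 2 → F) = i ^ n • (M *ᵥ ![1, 0])
    rw [my_mulVec_two]
    funext x
    fin_cases x
    · show (1 : F) = i ^ n * (M 0 0 * 1 + M 0 1 * 0)
      rw [mul_zero, add_zero, mul_one, h00]
    · show (0 : F) = i ^ n * (M 1 0 * 1 + M 1 1 * 0)
      rw [mul_zero, add_zero, mul_one, h10, mul_zero]

lemma phiP_smul {i : F} (hi : i ^ 2 = -1) (u : Fˣ) (hu : (u : F) = i) (A : SL2 F)
    (hA : A ∈ MulAction.stabilizer (SL2 F) (mkPt F i ![1, 0] (vec_fst_ne_zero 0)))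
    (p : Pts F i) : phiP hi u hu (A • p) = phiP hi u hu p := by
  obtain ⟨n, h10, h00, h11⟩ := (my_mem_stab_iff hi A).mp hA
  set M : Matrix (Fin 2) (Fin 2) F := (A : Matrix (Fin 2) (Fin 2) F) with hM
  induction p using Quot.ind with
  | _ v =>
    show phiV i u (slVecSMul A v) = phiV i u v
    have hw : (slVecSMul A v).1 = ![M 0 0 * v.1 0 + M 0 1 * v.1 1, i ^ n * v.1 1] := by
      show M *ᵥ v.1 = _
      rw [my_mulVec_two, h10, h11, zero_mul, zero_add]
    have hw1 : (slVecSMul A v).1 1 = i ^ n * v.1 1 := by rw [hw]; rfl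
    have hw0 : (slVecSMul A v).1 0 = M 0 0 * v.1 0 + M 0 1 * v.1 1 := by rw [hw]; rfl
    by_cases hv1 : v.1 1 = 0
    · have hz : (slVecSMul A v).1 1 = 0 := by rw [hw1, hv1, mul_zero]
      rw [phiV, phiV, dif_pos hz, dif_pos hv1]
      have hA00 : M 0 0 = i ^ (3 * n) := by
        calc M 0 0 = (i ^ (3 * n) * i ^ n) * M 0 0 := by rw [my_ipow_inv hi, one_mul]
          _ = i ^ (3 * n) * (i ^ n * M 0 0) := by ring
          _ = i ^ (3 * n) := by rw [h00, mul_one]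
      have key : Units.mk0 ((slVecSMul A v).1 0) (my_vec_fst_ne (slVecSMul A v).2 hz) =
          u ^ (3 * n) * Units.mk0 (v.1 0) (my_vec_fst_ne v.2 hv1) := by
        apply Units.ext
        simp [hw0, hv1, hA00, hu]
      rw [key, my_mk_pow_mul]
    · have hz : (slVecSMul A v).1 1 ≠ 0 := by
        rw [hw1]
        exact mul_ne_zero (pow_ne_zero n (my_i_ne_zero hi)) hv1
      rw [phiV, phiV, dif_neg hz, dif_neg hv1]
      have key : Units.mk0 ((slVecSMul A v).1 1) hz = u ^ n * Units.mk0 (v.1 1) hv1 := by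
        apply Units.ext
        simp [hw1, hu]
      rw [key, my_mk_pow_mul]

lemma phiP_eq_implies [Fintype F] {i : F} (hi : i ^ 2 = -1) (u : Fˣ) (hu : (u : F) = i)
    {p p' : Pts F i} (h : phiP hi u hu p = phiP hi u hu p') :
    ∃ A : SL2 F,
      A ∈ MulAction.stabilizer (SL2 F) (mkPt F i ![1, 0] (vec_fst_ne_zero 0)) ∧
      A • p = p' := by
  induction p using Quot.ind with
  | _ v =>
  induction p' using Quot.ind with
  | _ w =>
  have h' : phiV i u v = phiV i u w := h
  by_cases hv1 : v.1 1 = 0 <;> by_cases hw1 : w.1 1 = 0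
  · -- both second coordinates zero: the points are equal
    rw [phiV, phiV, dif_pos hv1, dif_pos hw1] at h'
    obtain ⟨n, hn⟩ := (my_mk_eq_iff u _ _).mp (Sum.inl.inj h')
    have hn' : w.1 0 = i ^ n * v.1 0 := by
      have := congrArg Units.val hn
      simpa [hu] using this
    refine ⟨1, one_mem _, ?_⟩
    refine (one_smul (SL2 F) (α := Pts F i) (Quot.mk (vrel F i) v)).trans ?_
    refine (my_pts_eq i hi).mpr ⟨n, ?_⟩
    funext x
    fin_cases x
    · exact hn'
    · show w.1 1 = i ^ n * v.1 1
      rw [hv1, hw1, mul_zero]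
  · exact absurd h' (by rw [phiV, phiV, dif_pos hv1, dif_neg hw1]; simp)
  · exact absurd h' (by rw [phiV, phiV, dif_neg hv1, dif_pos hw1]; simp)
  · -- both second coordinates nonzero
    rw [phiV, phiV, dif_neg hv1, dif_neg hw1] at h'
    obtain ⟨n, hn⟩ := (my_mk_eq_iff u _ _).mp (Sum.inr.inj h')
    have hn' : w.1 1 = i ^ n * v.1 1 := by
      have := congrArg Units.val hn
      simpa [hu] using this
    set M : Matrix (Fin 2) (Fin 2) F :=
      !![i ^ (3 * n), (w.1 0 - i ^ (3 * n) * v.1 0) / v.1 1; 0, i ^ n] with hMdef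
    have hdet : M.det = 1 := by
      rw [hMdef, Matrix.det_fin_two_of, mul_zero, sub_zero, my_ipow_inv hi]
    refine ⟨⟨M, hdet⟩, ?_, ?_⟩
    · refine (my_mem_stab_iff hi _).mpr ⟨n, ?_, ?_, ?_⟩
      · show M 1 0 = 0
        rw [hMdef]; simp
      · show i ^ n * M 0 0 = 1
        rw [hMdef]
        have : (!![i ^ (3 * n), (w.1 0 - i ^ (3 * n) * v.1 0) / v.1 1; 0, i ^ n]) 0 0
            = i ^ (3 * n) := by simp
        rw [this, mul_comm, my_ipow_inv hi]
      · show M 1 1 = i ^ n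
        rw [hMdef]; simp
    · refine (my_pts_eq i hi).mpr ⟨0, ?_⟩
      show w.1 = (i : F) ^ 0 • (M *ᵥ v.1)
      rw [pow_zero, one_smul, my_mulVec_two]
      have e00 : M 0 0 = i ^ (3 * n) := by rw [hMdef]; simp
      have e01 : M 0 1 = (w.1 0 - i ^ (3 * n) * v.1 0) / v.1 1 := by rw [hMdef]; simp
      have e10 : M 1 0 = 0 := by rw [hMdef]; simp
      have e11 : M 1 1 = i ^ n := by rw [hMdef]; simp
      rw [e00, e01, e10, e11]
      funext x
      fin_cases x
      · show w.1 0 = i ^ (3 * n) * v.1 0 + (w.1 0 - i ^ (3 * n) * v.1 0) / v.1 1 * v.1 1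
        rw [div_mul_cancel₀ _ hv1]
        ring
      · show w.1 1 = 0 * v.1 0 + i ^ n * v.1 1
        rw [zero_mul, zero_add, hn']

end AuxRank
lemma my_card_orbit_set {G : Type} [Group G] {α : Type} [MulAction G α] :
    Nat.card {s : Set α | ∃ x : α, s = MulAction.orbit G x} =
      Nat.card (Quotient (MulAction.orbitRel G α)) := by
  letI := MulAction.orbitRel G α
  apply Nat.card_congr
  apply Equiv.symm
  refine Equiv.ofBijective
    (fun q => ⟨MulAction.orbit G q.out, q.out, rfl⟩) ⟨?_, ?_⟩
  · intro q q' h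
    have h' : MulAction.orbit G q.out = MulAction.orbit G q'.out :=
      congrArg Subtype.val h
    have hrel := MulAction.orbit_eq_iff.mp h'
    rw [← Quotient.out_eq q, ← Quotient.out_eq q']
    exact Quotient.sound hrel
  · rintro ⟨s, x, rfl⟩
    refine ⟨⟦x⟧, ?_⟩
    apply Subtype.ext
    show MulAction.orbit G (⟦x⟧ : Quotient _).out = MulAction.orbit G x
    apply MulAction.orbit_eq_iff.mpr
    exact Quotient.mk_out x

lemma my_quot_equiv {F : Type} [Field F] [Fintype F] {i : F} (hi : i ^ 2 = -1)
    (u : Fˣ) (hu : (u : F) = i) :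
    Nonempty ((Quotient (MulAction.orbitRel
        ↥(MulAction.stabilizer (SL2 F) (mkPt F i ![1, 0] (vec_fst_ne_zero 0)))
        (Pts F i))) ≃
      ((Fˣ ⧸ Subgroup.zpowers u) ⊕ (Fˣ ⧸ Subgroup.zpowers u))) := by
  refine ⟨Equiv.ofBijective (Quotient.lift (phiP hi u hu) ?_) ⟨?_, ?_⟩⟩
  · intro a b hab
    have hab' : a ∈ MulAction.orbit
        (↥(MulAction.stabilizer (SL2 F) (mkPt F i ![1, 0] (vec_fst_ne_zero 0)))) b := hab
    obtain ⟨g, hg⟩ := hab'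
    rw [← hg]
    exact phiP_smul hi u hu (g : SL2 F) g.2 b
  · intro qa qb
    induction qa using Quotient.ind with
    | _ a =>
    induction qb using Quotient.ind with
    | _ b =>
    intro h
    have h' : phiP hi u hu a = phiP hi u hu b := h
    obtain ⟨A, hA, hAb⟩ := phiP_eq_implies hi u hu h'
    have hrel : b ∈ MulAction.orbit
        (↥(MulAction.stabilizer (SL2 F) (mkPt F i ![1, 0] (vec_fst_ne_zero 0)))) a :=
      ⟨⟨A, hA⟩, hAb⟩
    exact (Quotient.sound hrel).symm
  · intro c
    rcases c with c | c <;> obtain ⟨y, rfl⟩ := QuotientGroup.mk_surjective c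
    · have hne : (![((y : Fˣ) : F), 0] : Fin 2 → F) ≠ 0 := by
        intro h
        exact y.ne_zero (by simpa using congrFun h 0)
      refine ⟨⟦Quot.mk (vrel F i) ⟨![((y : Fˣ) : F), 0], hne⟩⟧, ?_⟩
      show phiV i u ⟨![((y : Fˣ) : F), 0], hne⟩ = _
      have h1 : (⟨![((y : Fˣ) : F), 0], hne⟩ : Vec F).1 1 = 0 := rfl
      unfold phiV
      rw [dif_pos h1]
      have : Units.mk0 ((⟨![((y : Fˣ) : F), 0], hne⟩ : Vec F).1 0)
          (my_vec_fst_ne hne h1) = y := Units.ext rfl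
      rw [this]
    · have hne : (![0, ((y : Fˣ) : F)] : Fin 2 → F) ≠ 0 := by
        intro h
        exact y.ne_zero (by simpa using congrFun h 1)
      refine ⟨⟦Quot.mk (vrel F i) ⟨![0, ((y : Fˣ) : F)], hne⟩⟧, ?_⟩
      show phiV i u ⟨![0, ((y : Fˣ) : F)], hne⟩ = _
      have h1 : (⟨![0, ((y : Fˣ) : F)], hne⟩ : Vec F).1 1 ≠ 0 := y.ne_zero
      unfold phiV
      rw [dif_neg h1]
      have : Units.mk0 ((⟨![0, ((y : Fˣ) : F)], hne⟩ : Vec F).1 1) h1 = y :=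
        Units.ext rfl
      rw [this]
/-- The rank of the transitive permutation group `PSL(2,q)` acting on `P`, i.e. the number
of orbits of a point stabilizer on `P`, is `(q-1)/2`; equivalently the Schurian association
scheme has `(q-1)/2 - 1 = (q-3)/2` classes. -/
theorem stmt_7 (q : ℕ) (F : Type) [Field F] [Fintype F]
    (hcard : Fintype.card F = q) (hq : q % 4 = 1)
    (i : F) (hi : i ^ 2 = -1) :
    Nat.card {s : Set (Pts F i) | ∃ x : Pts F i,
        s = MulAction.orbit (↥(MulAction.stabilizer (SL2 F) (mkPt F i ![1, 0] (vec_fst_ne_zero 0)))) x} = (q - 1) / 2 ∧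
    Nat.card {s : Set (Pts F i) | ∃ x : Pts F i,
        s = MulAction.orbit (↥(MulAction.stabilizer (SL2 F) (mkPt F i ![1, 0] (vec_fst_ne_zero 0)))) x} - 1 = (q - 3) / 2 := by
  classical
  have hine : i ≠ 0 := my_i_ne_zero hi
  set u : Fˣ := Units.mk0 i hine with hudef
  have hu : (u : F) = i := rfl
  have hq2 : Fintype.card F % 2 = 1 := by rw [hcard]; omega
  have hchar : ringChar F ≠ 2 := by
    intro h
    have := FiniteField.even_card_of_char_two h
    omega
  have hneg : (-1 : F) ≠ 1 := Ring.neg_one_ne_one_of_char_ne_two hchar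
  have hu2 : u ^ 2 = -1 := by
    apply Units.ext
    rw [Units.val_pow_eq_pow_val, Units.val_neg, Units.val_one, hu, hi]
  have hu4 : u ^ 4 = 1 := by
    have h42 : u ^ 4 = (u ^ 2) ^ 2 := by group
    rw [h42, hu2, neg_one_sq]
  have horder : orderOf u = 4 := by
    have hdvd : orderOf u ∣ 4 := orderOf_dvd_of_pow_eq_one hu4
    have h2 : ¬ orderOf u ∣ 2 := by
      rw [orderOf_dvd_iff_pow_eq_one, hu2]
      intro h
      exact hneg (by simpa using congrArg Units.val h)
    have hle : orderOf u ≤ 4 := Nat.le_of_dvd (by norm_num) hdvd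
    interval_cases h : orderOf u <;> revert hdvd h2 <;> decide
  obtain ⟨e⟩ := my_quot_equiv hi u hu
  have hqc : Nat.card {s : Set (Pts F i) | ∃ x : Pts F i,
      s = MulAction.orbit
        (↥(MulAction.stabilizer (SL2 F) (mkPt F i ![1, 0] (vec_fst_ne_zero 0)))) x} =
      Nat.card (Fˣ ⧸ Subgroup.zpowers u) + Nat.card (Fˣ ⧸ Subgroup.zpowers u) := by
    rw [my_card_orbit_set, Nat.card_congr e, Nat.card_sum]
  have hcardU : Nat.card Fˣ = q - 1 := by
    rw [Nat.card_eq_fintype_card, Fintype.card_units, hcard]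
  have hfull := Subgroup.card_eq_card_quotient_mul_card_subgroup (Subgroup.zpowers u)
  rw [Nat.card_zpowers, horder, hcardU] at hfull
  constructor
  · rw [hqc]; omega
  · rw [hqc]; omega
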